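/- arXiv:2204.13360 — 2 statements merged into one kernel-verified Lean document; each statement's English description precedes it below -/
import Mathlib

section
/- Uniform characteristic function limit over all biases: For every fixed t ∈ ℝ, sup_{m ∈ [−1,1]} | e^{−i m t √n} (cos(t/√n) + i m sin(t/√n))^n − exp(−(1 − m²) t²/2) | → 0 as n → ∞. (The expression e^{−imt√n}(cos(t/√n)+im sin(t/√n))^n is the characteristic function at t of Σ_{i=1}^n (X_i − m)/√n for i.i.d. {−1,1}-valued X_i with P(X_i = 1) = (1+m)/2.) -/
open MeasureTheory ProbabilityTheory Filter Topology

noncomputable section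

set_option maxHeartbeats 1000000

/-- third-order Taylor bound for `exp (I x)` -/
lemma exp_I_taylor (x : ℝ) (hx : |x| ≤ 1) :
    Norm.norm (Complex.exp (Complex.I * x) - (1 + Complex.I * x - (x : ℂ) ^ 2 / 2)) ≤
      |x| ^ 3 := by
  have hx' : Norm.norm (Complex.I * x) ≤ 1 := by
    simpa using hx
  have h := Complex.exp_bound hx' (n := 3) (by norm_num)
  have hsum : (∑ m ∈ Finset.range 3, (Complex.I * x) ^ m / m.factorial)
      = 1 + Complex.I * x - (x : ℂ) ^ 2 / 2 := by
    rw [Finset.sum_range_succ, Finset.sum_range_succ, Finset.sum_range_succ,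
      Finset.sum_range_zero]
    have : (Complex.I * x) ^ 2 = -(x : ℂ) ^ 2 := by
      rw [mul_pow, Complex.I_sq]; ring
    rw [this]
    norm_num [Nat.factorial]
    try ring
  rw [hsum] at h
  have habs : Norm.norm (Complex.I * x) = |x| := by simp
  rw [habs] at h
  have h3 : (0:ℝ) ≤ |x| ^ 3 := by positivity
  have : |x| ^ 3 * ((Nat.succ 3 : ℝ) * ((Nat.factorial 3 : ℝ) * (3:ℝ))⁻¹) ≤ |x| ^ 3 := by
    norm_num [Nat.factorial]
    nlinarith
  calc Norm.norm (Complex.exp (Complex.I * x) - (1 + Complex.I * x - (x : ℂ) ^ 2 / 2))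
      ≤ |x| ^ 3 * ((Nat.succ 3 : ℝ) * ((Nat.factorial 3 : ℝ) * (3:ℝ))⁻¹) := by
        exact_mod_cast h
    _ ≤ |x| ^ 3 := this

lemma abs_A_le_one (θ m : ℝ) (hm : |m| ≤ 1) :
    Norm.norm (Complex.exp (-(Complex.I * m * θ)) *
      ((Real.cos θ : ℂ) + Complex.I * m * (Real.sin θ))) ≤ 1 := by
  rw [norm_mul]
  have h1 : Norm.norm (Complex.exp (-(Complex.I * m * θ))) = 1 := by
    rw [Complex.norm_exp]
    have : (-(Complex.I * (m:ℂ) * (θ:ℂ))).re = 0 := by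
      simp only [Complex.neg_re, Complex.mul_re, Complex.mul_im, Complex.I_re, Complex.I_im,
        Complex.ofReal_re, Complex.ofReal_im]
      ring
    rw [this, Real.exp_zero]
  have h2 : Norm.norm ((Real.cos θ : ℂ) + Complex.I * m * (Real.sin θ)) ≤ 1 := by
    rw [Complex.norm_def]
    have hre : ((Real.cos θ : ℂ) + Complex.I * m * (Real.sin θ)).re = Real.cos θ := by
      simp only [Complex.add_re, Complex.mul_re, Complex.mul_im, Complex.I_re, Complex.I_im,
        Complex.ofReal_re, Complex.ofReal_im]
      ring
    have him : ((Real.cos θ : ℂ) + Complex.I * m * (Real.sin θ)).im = m * Real.sin θ := by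
      simp only [Complex.add_im, Complex.mul_re, Complex.mul_im, Complex.I_re, Complex.I_im,
        Complex.ofReal_re, Complex.ofReal_im]
      ring
    rw [Complex.normSq_apply, hre, him]
    have hs := Real.sin_sq_add_cos_sq θ
    have hm2 : m ^ 2 ≤ 1 := by nlinarith [abs_nonneg m, sq_abs m]
    have hb : Real.cos θ * Real.cos θ + m * Real.sin θ * (m * Real.sin θ) ≤ 1 := by nlinarith
    calc Real.sqrt (Real.cos θ * Real.cos θ + m * Real.sin θ * (m * Real.sin θ))
        ≤ Real.sqrt 1 := Real.sqrt_le_sqrt hb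
      _ = 1 := Real.sqrt_one
  rw [h1, one_mul]
  exact h2

lemma abs_B_le_one (θ m : ℝ) (hm : |m| ≤ 1) :
    Norm.norm (Complex.exp (-(((1 - m ^ 2) * θ ^ 2 / 2 : ℝ) : ℂ))) ≤ 1 := by
  rw [Complex.norm_exp]
  have hm2 : m ^ 2 ≤ 1 := by nlinarith [abs_nonneg m, sq_abs m]
  have hre : (-(((1 - m ^ 2) * θ ^ 2 / 2 : ℝ) : ℂ)).re = -((1 - m ^ 2) * θ ^ 2 / 2) := by
    simp only [Complex.neg_re, Complex.ofReal_re]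
  rw [hre]
  apply Real.exp_le_one_iff.2
  nlinarith [sq_nonneg θ]

/-- The key one-step estimate, uniform in `m`. -/
lemma key_est (θ m : ℝ) (hm : |m| ≤ 1) :
    Norm.norm (Complex.exp (-(Complex.I * m * θ)) *
      ((Real.cos θ : ℂ) + Complex.I * m * (Real.sin θ)) -
      Complex.exp (-(((1 - m ^ 2) * θ ^ 2 / 2 : ℝ) : ℂ))) ≤ 16 * |θ| ^ 3 := by
  obtain ⟨hm1, hm2⟩ := abs_le.1 hm
  rcases le_or_gt (1/2 : ℝ) |θ| with hθ | hθ
  · -- large θ : trivial bound by 2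
    have h1 := abs_A_le_one θ m hm
    have h2 := abs_B_le_one θ m hm
    have h3 : (1/2 : ℝ)^3 ≤ |θ| ^ 3 := pow_le_pow_left₀ (by norm_num) hθ 3
    calc Norm.norm (Complex.exp (-(Complex.I * m * θ)) *
          ((Real.cos θ : ℂ) + Complex.I * m * (Real.sin θ)) -
          Complex.exp (-(((1 - m ^ 2) * θ ^ 2 / 2 : ℝ) : ℂ))) ≤
        Norm.norm (Complex.exp (-(Complex.I * m * θ)) *
          ((Real.cos θ : ℂ) + Complex.I * m * (Real.sin θ))) +
        Norm.norm (Complex.exp (-(((1 - m ^ 2) * θ ^ 2 / 2 : ℝ) : ℂ))) :=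
          norm_sub_le _ _
      _ ≤ 2 := by linarith
      _ ≤ 16 * |θ| ^ 3 := by nlinarith
  · -- small θ : Taylor expansion
    set x₁ : ℝ := (1 - m) * θ with hx1
    set x₂ : ℝ := -((1 + m) * θ) with hx2
    set s : ℝ := (1 - m ^ 2) * θ ^ 2 / 2 with hs
    have E1 : Complex.exp (Complex.I * (x₁ : ℂ)) =
        Complex.exp (-(Complex.I * m * θ)) *
          ((Real.cos θ : ℂ) + (Real.sin θ : ℂ) * Complex.I) := by
      rw [show ((Real.cos θ : ℂ) + (Real.sin θ : ℂ) * Complex.I) =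
            Complex.exp ((θ : ℂ) * Complex.I) by
          rw [Complex.exp_mul_I, Complex.ofReal_cos, Complex.ofReal_sin],
        ← Complex.exp_add]
      congr 1
      rw [hx1]
      push_cast
      ring
    have E2 : Complex.exp (Complex.I * (x₂ : ℂ)) =
        Complex.exp (-(Complex.I * m * θ)) *
          ((Real.cos θ : ℂ) - (Real.sin θ : ℂ) * Complex.I) := by
      rw [show ((Real.cos θ : ℂ) - (Real.sin θ : ℂ) * Complex.I) =
            Complex.exp (((-θ : ℝ) : ℂ) * Complex.I) by
          rw [Complex.exp_mul_I]
          push_cast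
          rw [Complex.cos_neg, Complex.sin_neg]
          ring,
        ← Complex.exp_add]
      congr 1
      rw [hx2]
      push_cast
      ring
    have hA : Complex.exp (-(Complex.I * m * θ)) *
        ((Real.cos θ : ℂ) + Complex.I * m * (Real.sin θ)) =
        ((1 + (m : ℂ)) / 2) * Complex.exp (Complex.I * (x₁ : ℂ)) +
        ((1 - (m : ℂ)) / 2) * Complex.exp (Complex.I * (x₂ : ℂ)) := by
      rw [E1, E2]; ring
    have hB : Complex.exp (-((s : ℝ) : ℂ)) = ((Real.exp (-s) : ℝ) : ℂ) := by
      rw [Complex.ofReal_exp]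
      push_cast
      ring_nf
    have hid : Complex.exp (-(Complex.I * m * θ)) *
        ((Real.cos θ : ℂ) + Complex.I * m * (Real.sin θ)) -
        Complex.exp (-(((1 - m ^ 2) * θ ^ 2 / 2 : ℝ) : ℂ)) =
        ((1 + (m : ℂ)) / 2) *
          (Complex.exp (Complex.I * (x₁ : ℂ)) - (1 + Complex.I * x₁ - (x₁ : ℂ) ^ 2 / 2)) +
        ((1 - (m : ℂ)) / 2) *
          (Complex.exp (Complex.I * (x₂ : ℂ)) - (1 + Complex.I * x₂ - (x₂ : ℂ) ^ 2 / 2)) -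
        (((Real.exp (-s) : ℝ) : ℂ) - (1 - (s : ℂ))) := by
      rw [hA, ← hs, hB]
      rw [hx1, hx2, hs]
      push_cast
      ring
    rw [hid]
    have hx1abs : |x₁| ≤ 1 := by
      rw [hx1, abs_mul]
      have : |1 - m| ≤ 2 := by rw [abs_le]; constructor <;> linarith
      nlinarith [abs_nonneg (1 - m), abs_nonneg θ]
    have hx2abs : |x₂| ≤ 1 := by
      rw [hx2, abs_neg, abs_mul]
      have : |1 + m| ≤ 2 := by rw [abs_le]; constructor <;> linarith
      nlinarith [abs_nonneg (1 + m), abs_nonneg θ]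
    have hx1cube : |x₁| ^ 3 ≤ 8 * |θ| ^ 3 := by
      rw [hx1, abs_mul, mul_pow]
      have h1 : |1 - m| ≤ 2 := by rw [abs_le]; constructor <;> linarith
      have h2 : |1 - m| ^ 3 ≤ 2 ^ 3 := pow_le_pow_left₀ (abs_nonneg _) h1 3
      nlinarith [pow_nonneg (abs_nonneg θ) 3, pow_nonneg (abs_nonneg (1 - m)) 3]
    have hx2cube : |x₂| ^ 3 ≤ 8 * |θ| ^ 3 := by
      rw [hx2, abs_neg, abs_mul, mul_pow]
      have h1 : |1 + m| ≤ 2 := by rw [abs_le]; constructor <;> linarith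
      have h2 : |1 + m| ^ 3 ≤ 2 ^ 3 := pow_le_pow_left₀ (abs_nonneg _) h1 3
      nlinarith [pow_nonneg (abs_nonneg θ) 3, pow_nonneg (abs_nonneg (1 + m)) 3]
    have hT1 := exp_I_taylor x₁ hx1abs
    have hT2 := exp_I_taylor x₂ hx2abs
    have hsnn : 0 ≤ s := by
      rw [hs]
      nlinarith [mul_nonneg (by linarith : (0:ℝ) ≤ 1 - m) (by linarith : (0:ℝ) ≤ 1 + m),
        sq_nonneg θ]
    have hsle : s ≤ θ ^ 2 / 2 := by
      rw [hs]
      nlinarith [sq_nonneg θ, sq_nonneg m]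
    have hDs : |Real.exp (-s) - 1 - (-s)| ≤ (-s) ^ 2 := by
      apply Real.abs_exp_sub_one_sub_id_le
      rw [abs_neg, abs_of_nonneg hsnn]
      nlinarith [sq_abs θ, abs_nonneg θ]
    have hD : Norm.norm (((Real.exp (-s) : ℝ) : ℂ) - (1 - (s : ℂ))) ≤ s ^ 2 := by
      have heq : (((Real.exp (-s) : ℝ) : ℂ) - (1 - (s : ℂ))) =
          ((Real.exp (-s) - 1 - (-s) : ℝ) : ℂ) := by push_cast; ring
      rw [heq, Complex.norm_real, Real.norm_eq_abs]
      calc |Real.exp (-s) - 1 - (-s)| ≤ (-s) ^ 2 := hDs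
        _ = s ^ 2 := by ring
    have hs2 : s ^ 2 ≤ |θ| ^ 3 := by
      have h1 : s ^ 2 ≤ (θ ^ 2 / 2) ^ 2 := pow_le_pow_left₀ hsnn hsle 2
      have h2 : (θ ^ 2 / 2) ^ 2 = |θ| ^ 4 / 4 := by
        have h4 : |θ| ^ 4 = θ ^ 4 := by rw [← abs_pow, abs_of_nonneg (by positivity : (0:ℝ) ≤ θ ^ 4)]
        rw [h4]; ring
      have habs1 : |θ| ≤ 1 := by linarith
      have h3 : |θ| ^ 4 ≤ |θ| ^ 3 := by
        calc |θ| ^ 4 = |θ| ^ 3 * |θ| := by ring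
          _ ≤ |θ| ^ 3 * 1 := by
              apply mul_le_mul_of_nonneg_left habs1 (pow_nonneg (abs_nonneg θ) 3)
          _ = |θ| ^ 3 := by ring
      linarith only [h1, h2, h3, pow_nonneg (abs_nonneg θ) 3]
    have hw1 : Norm.norm ((1 + (m : ℂ)) / 2) = (1 + m) / 2 := by
      rw [show ((1 + (m : ℂ)) / 2) = (((1 + m) / 2 : ℝ) : ℂ) by push_cast; ring,
        Complex.norm_real, Real.norm_eq_abs, abs_of_nonneg (by linarith)]
    have hw2 : Norm.norm ((1 - (m : ℂ)) / 2) = (1 - m) / 2 := by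
      rw [show ((1 - (m : ℂ)) / 2) = (((1 - m) / 2 : ℝ) : ℂ) by push_cast; ring,
        Complex.norm_real, Real.norm_eq_abs, abs_of_nonneg (by linarith)]
    set R₁ : ℂ := Complex.exp (Complex.I * (x₁ : ℂ)) - (1 + Complex.I * x₁ - (x₁ : ℂ) ^ 2 / 2)
      with hR1
    set R₂ : ℂ := Complex.exp (Complex.I * (x₂ : ℂ)) - (1 + Complex.I * x₂ - (x₂ : ℂ) ^ 2 / 2)
      with hR2
    set D : ℂ := ((Real.exp (-s) : ℝ) : ℂ) - (1 - (s : ℂ)) with hDdef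
    have tri : Norm.norm (((1 + (m : ℂ)) / 2) * R₁ + ((1 - (m : ℂ)) / 2) * R₂ - D) ≤
        Norm.norm (((1 + (m : ℂ)) / 2) * R₁) + Norm.norm (((1 - (m : ℂ)) / 2) * R₂) +
        Norm.norm D := by
      refine (norm_sub_le _ _).trans ?_
      have := norm_add_le (((1 + (m : ℂ)) / 2) * R₁)
        (((1 - (m : ℂ)) / 2) * R₂)
      linarith
    rw [norm_mul, norm_mul, hw1, hw2] at tri
    have b1 : (1 + m) / 2 * Norm.norm R₁ ≤ (1 + m) / 2 * (8 * |θ| ^ 3) :=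
      mul_le_mul_of_nonneg_left (hT1.trans hx1cube) (by linarith)
    have b2 : (1 - m) / 2 * Norm.norm R₂ ≤ (1 - m) / 2 * (8 * |θ| ^ 3) :=
      mul_le_mul_of_nonneg_left (hT2.trans hx2cube) (by linarith)
    have sumb : (1 + m) / 2 * (8 * |θ| ^ 3) + (1 - m) / 2 * (8 * |θ| ^ 3) = 8 * |θ| ^ 3 := by
      ring
    have hfin : (8 : ℝ) * |θ| ^ 3 + |θ| ^ 3 ≤ 16 * |θ| ^ 3 := by
      nlinarith [pow_nonneg (abs_nonneg θ) 3]
    linarith only [tri, b1, b2, hD, hs2, sumb, hfin]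

lemma pow_diff_bound (a b : ℂ) (ha : Norm.norm a ≤ 1) (hb : Norm.norm b ≤ 1) :
    ∀ n : ℕ, Norm.norm (a ^ n - b ^ n) ≤ n * Norm.norm (a - b) := by
  intro n
  induction n with
  | zero => simp
  | succ n ih =>
    have key : a ^ (n + 1) - b ^ (n + 1) = a * (a ^ n - b ^ n) + (a - b) * b ^ n := by ring
    rw [key]
    calc Norm.norm (a * (a ^ n - b ^ n) + (a - b) * b ^ n)
        ≤ Norm.norm (a * (a ^ n - b ^ n)) + Norm.norm ((a - b) * b ^ n) :=
          norm_add_le _ _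
      _ = Norm.norm a * Norm.norm (a ^ n - b ^ n) +
          Norm.norm (a - b) * Norm.norm b ^ n := by rw [norm_mul, norm_mul, norm_pow]
      _ ≤ 1 * (n * Norm.norm (a - b)) + Norm.norm (a - b) * 1 := by
          have h1 : Norm.norm a * Norm.norm (a ^ n - b ^ n) ≤ 1 * (n * Norm.norm (a - b)) := by
            apply mul_le_mul ha ih (norm_nonneg _) (by norm_num)
          have h2 : Norm.norm (a - b) * Norm.norm b ^ n ≤ Norm.norm (a - b) * 1 := by
            apply mul_le_mul_of_nonneg_left (pow_le_one₀ (norm_nonneg _) hb)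
              (norm_nonneg _)
          linarith
      _ = (n + 1 : ℕ) * Norm.norm (a - b) := by push_cast; ring

/-- **Uniform characteristic function limit over all biases**: for every fixed
`t ∈ ℝ`,
`sup_{m ∈ [−1,1]} |e^{−imt√n}(cos(t/√n) + i m sin(t/√n))^n − exp(−(1−m²)t²/2)| → 0`
as `n → ∞`. -/
theorem charfun_uniform_limit (t : ℝ) :
    Tendsto
      (fun n : ℕ =>
        ⨆ m : Set.Icc (-1 : ℝ) 1,
          Norm.norm
            (Complex.exp (-(Complex.I * ((m : ℝ) : ℂ) * (t : ℂ) *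
                ((Real.sqrt n : ℝ) : ℂ))) *
              (((Real.cos (t / Real.sqrt n) : ℝ) : ℂ)
                + Complex.I * ((m : ℝ) : ℂ) * ((Real.sin (t / Real.sqrt n) : ℝ) : ℂ)) ^ n
            - Complex.exp (-(((1 - (m : ℝ) ^ 2) * t ^ 2 / 2 : ℝ) : ℂ))))
      atTop (𝓝 0) := by
  haveI : Nonempty (Set.Icc (-1 : ℝ) 1) := ⟨⟨0, by norm_num⟩⟩
  have hsqrt_atTop : Tendsto (fun n : ℕ => Real.sqrt n) atTop atTop := by
    apply tendsto_atTop_atTop.2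
    intro b
    refine ⟨⌈b * b⌉₊, fun n hn => ?_⟩
    have h1 : (b * b : ℝ) ≤ n := le_trans (Nat.le_ceil _) (by exact_mod_cast hn)
    calc b ≤ |b| := le_abs_self b
      _ = Real.sqrt (b * b) := (Real.sqrt_mul_self_eq_abs b).symm
      _ ≤ Real.sqrt n := Real.sqrt_le_sqrt h1
  have hg : Tendsto (fun n : ℕ => 16 * |t| ^ 3 / Real.sqrt n) atTop (𝓝 0) :=
    Tendsto.div_atTop tendsto_const_nhds hsqrt_atTop
  apply squeeze_zero' (g := fun n : ℕ => 16 * |t| ^ 3 / Real.sqrt n)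
  · filter_upwards with n
    exact Real.iSup_nonneg fun m => norm_nonneg _
  · filter_upwards [eventually_ge_atTop 1] with n hn
    have hn0 : (0 : ℝ) < n := by exact_mod_cast hn
    have hsq_pos : 0 < Real.sqrt n := Real.sqrt_pos.2 hn0
    have hsq_sq : Real.sqrt n * Real.sqrt n = n := Real.mul_self_sqrt (le_of_lt hn0)
    set θ : ℝ := t / Real.sqrt n with hθ
    apply ciSup_le
    rintro ⟨m, hm1, hm2⟩
    have hm : |m| ≤ 1 := abs_le.2 ⟨hm1, hm2⟩
    simp only
    have hdm : t / Real.sqrt n * Real.sqrt n = t := div_mul_cancel₀ t hsq_pos.ne'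
    have hreal1 : (n : ℝ) * θ = t * Real.sqrt n := by
      calc (n : ℝ) * θ = (Real.sqrt n * Real.sqrt n) * (t / Real.sqrt n) := by rw [hθ, hsq_sq]
        _ = (t / Real.sqrt n * Real.sqrt n) * Real.sqrt n := by ring
        _ = t * Real.sqrt n := by rw [hdm]
    have hθ2 : (n : ℝ) * θ ^ 2 = t ^ 2 := by
      calc (n : ℝ) * θ ^ 2 = (Real.sqrt n * Real.sqrt n) * (t / Real.sqrt n) ^ 2 := by
            rw [hθ, hsq_sq]
        _ = (t / Real.sqrt n * Real.sqrt n) ^ 2 := by ring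
        _ = t ^ 2 := by rw [hdm]
    have hexp1 : Complex.exp (-(Complex.I * (m : ℂ) * (t : ℂ) * ((Real.sqrt n : ℝ) : ℂ))) =
        (Complex.exp (-(Complex.I * m * θ))) ^ n := by
      rw [← Complex.exp_nat_mul]
      congr 1
      calc -(Complex.I * (m : ℂ) * (t : ℂ) * ((Real.sqrt n : ℝ) : ℂ))
          = -(Complex.I * (m : ℂ) * (((t * Real.sqrt n : ℝ)) : ℂ)) := by push_cast; ring
        _ = -(Complex.I * (m : ℂ) * ((((n : ℝ) * θ : ℝ)) : ℂ)) := by rw [← hreal1]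
        _ = (n : ℂ) * -(Complex.I * m * θ) := by push_cast; ring
    have hexp2 : Complex.exp (-(((1 - m ^ 2) * t ^ 2 / 2 : ℝ) : ℂ)) =
        (Complex.exp (-(((1 - m ^ 2) * θ ^ 2 / 2 : ℝ) : ℂ))) ^ n := by
      rw [← Complex.exp_nat_mul]
      congr 1
      have hr : (1 - m ^ 2) * t ^ 2 / 2 = (n : ℝ) * ((1 - m ^ 2) * θ ^ 2 / 2) := by
        linear_combination ((1 - m ^ 2) / 2) * hθ2.symm
      calc -(((1 - m ^ 2) * t ^ 2 / 2 : ℝ) : ℂ)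
          = -((((n : ℝ) * ((1 - m ^ 2) * θ ^ 2 / 2) : ℝ)) : ℂ) := by rw [← hr]
        _ = (n : ℂ) * -(((1 - m ^ 2) * θ ^ 2 / 2 : ℝ) : ℂ) := by push_cast; ring
    rw [hexp1, hexp2, ← mul_pow]
    have hbound := key_est θ m hm
    have hA := abs_A_le_one θ m hm
    have hB := abs_B_le_one θ m hm
    have hpow := pow_diff_bound _ _ hA hB n
    have habsθ : |θ| = |t| / Real.sqrt n := by
      rw [hθ, abs_div, abs_of_nonneg (Real.sqrt_nonneg _)]
    have hcube : Real.sqrt (n:ℝ) ^ 3 = (n : ℝ) * Real.sqrt n := by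
      calc Real.sqrt (n:ℝ) ^ 3 = (Real.sqrt n * Real.sqrt n) * Real.sqrt n := by ring
        _ = (n : ℝ) * Real.sqrt n := by rw [hsq_sq]
    have hfinal : (n : ℝ) * (16 * |θ| ^ 3) = 16 * |t| ^ 3 / Real.sqrt n := by
      rw [habsθ, div_pow, hcube, eq_div_iff hsq_pos.ne']
      field_simp
    calc Norm.norm ((Complex.exp (-(Complex.I * m * θ)) *
            ((Real.cos θ : ℂ) + Complex.I * m * (Real.sin θ))) ^ n -
          (Complex.exp (-(((1 - m ^ 2) * θ ^ 2 / 2 : ℝ) : ℂ))) ^ n)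
        ≤ n * Norm.norm (Complex.exp (-(Complex.I * m * θ)) *
            ((Real.cos θ : ℂ) + Complex.I * m * (Real.sin θ)) -
          Complex.exp (-(((1 - m ^ 2) * θ ^ 2 / 2 : ℝ) : ℂ))) := hpow
      _ ≤ (n : ℝ) * (16 * |θ| ^ 3) := by
          apply mul_le_mul_of_nonneg_left hbound (by positivity)
      _ = 16 * |t| ^ 3 / Real.sqrt n := hfinal
  · exact hg
end
end

section
/- Law of large numbers for the collective bias model: Let μ be a symmetric probability measure on [−1,1] (invariant under m ↦ −m), and for each n let ℙ_CBM be the probability measure on {−1,1}^n given by ℙ_CBM(X_1 = x_1, …, X_n = x_n) = ∫_{[−1,1]} P_m(X_1 = x_1, …, X_n = x_n) μ(dm) for all configurations, where P_m is the product measure with P_m(X_i = 1) = (1+m)/2. Then S_n/n := (Σ_{i=1}^n X_i)/n converges in distribution to μ as n → ∞. -/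
open MeasureTheory ProbabilityTheory Filter Topology

noncomputable section

/-- The ±1 value of a vote. -/
def val (b : Bool) : ℝ := if b then 1 else -1

/-- The measure on `Bool` with mass `(1+m)/2` on `true` and `(1−m)/2` on `false`;
for `m ∈ [−1,1]` this is the law of a single vote with bias `m`. -/
def bern (m : ℝ) : Measure Bool :=
  ENNReal.ofReal ((1 + m) / 2) • Measure.dirac true
    + ENNReal.ofReal ((1 - m) / 2) • Measure.dirac false

/-- The collective bias model with de Finetti measure `μ` and `n` voters:
`ℙ_CBM(A) = ∫_{[−1,1]} P_m(A) μ(dm)`, where `P_m` is the product of `n` copies of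
the bias-`m` vote distribution. -/
lemma bern_apply (m : ℝ) (s : Set Bool) :
    bern m s = ENNReal.ofReal ((1 + m) / 2) * s.indicator 1 true
      + ENNReal.ofReal ((1 - m) / 2) * s.indicator 1 false := by
  have hs : MeasurableSet s := s.toFinite.measurableSet
  simp [bern, Measure.dirac_apply' _ hs]

lemma bern_singleton (m : ℝ) (b : Bool) :
    bern m {b} = ENNReal.ofReal (if b then (1 + m) / 2 else (1 - m) / 2) := by
  cases b <;> simp [bern_apply]

lemma isProbabilityMeasure_bern {m : ℝ} (hm : m ∈ Set.Icc (-1 : ℝ) 1) :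
    IsProbabilityMeasure (bern m) := by
  obtain ⟨h1, h2⟩ := hm
  constructor
  rw [bern_apply]
  simp only [Set.indicator_univ, Pi.one_apply, mul_one]
  rw [← ENNReal.ofReal_add (by linarith) (by linarith)]
  norm_num
  ring

lemma integral_bern (m : ℝ) (h : Bool → ℝ) :
    ∫ b, h b ∂(bern m) = (max ((1 + m) / 2) 0) * h true + (max ((1 - m) / 2) 0) * h false := by
  haveI : ∀ (b : Bool) (c : ℝ), IsFiniteMeasure (ENNReal.ofReal c • Measure.dirac b) := by
    intro b c
    constructor
    simp [lt_top_iff_ne_top]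
  rw [bern, integral_add_measure (Integrable.of_finite) (Integrable.of_finite),
    integral_smul_measure, integral_smul_measure, integral_dirac, integral_dirac]
  simp [ENNReal.toReal_ofReal_eq_iff, ENNReal.toReal_ofReal', smul_eq_mul]

lemma integral_bern' {m : ℝ} (hm : m ∈ Set.Icc (-1 : ℝ) 1) (h : Bool → ℝ) :
    ∫ b, h b ∂(bern m) = ((1 + m) / 2) * h true + ((1 - m) / 2) * h false := by
  obtain ⟨h1, h2⟩ := hm
  rw [integral_bern, max_eq_left (by linarith), max_eq_left (by linarith)]

lemma integral_val {m : ℝ} (hm : m ∈ Set.Icc (-1 : ℝ) 1) :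
    ∫ b, val b ∂(bern m) = m := by
  rw [integral_bern' hm]; simp [val]; ring

lemma integral_val_sub_sq {m : ℝ} (hm : m ∈ Set.Icc (-1 : ℝ) 1) :
    ∫ b, (val b - m)^2 ∂(bern m) = 1 - m^2 := by
  rw [integral_bern' hm]; simp [val]; ring

lemma integral_val_sub {m : ℝ} (hm : m ∈ Set.Icc (-1 : ℝ) 1) :
    ∫ b, (val b - m) ∂(bern m) = 0 := by
  rw [integral_bern' hm]; simp [val]; ring

lemma cross {m : ℝ} (hm : m ∈ Set.Icc (-1 : ℝ) 1) {n : ℕ} (i j : Fin n) :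
    ∫ ω, (val (ω i) - m) * (val (ω j) - m) ∂(Measure.pi fun _ : Fin n => bern m)
      = if i = j then 1 - m ^ 2 else 0 := by
  haveI := isProbabilityMeasure_bern hm
  letI : MeasureSpace Bool := ⟨bern m⟩
  have hvol : (Measure.pi fun _ : Fin n => bern m) = (volume : Measure (Fin n → Bool)) := rfl
  rw [hvol]
  by_cases hij : i = j
  · subst hij
    simp only [if_pos rfl]
    set f : Fin n → Bool → ℝ := fun k b => if k = i then (val b - m) ^ 2 else 1 with hf
    have h1 : ∀ ω : Fin n → Bool, (val (ω i) - m) * (val (ω i) - m) = ∏ k, f k (ω k) := by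
      intro ω
      rw [← Finset.mul_prod_erase _ _ (Finset.mem_univ i)]
      rw [Finset.prod_eq_one (fun k hk => by simp [hf, (Finset.mem_erase.1 hk).1])]
      simp [hf]; ring
    simp_rw [h1]
    rw [MeasureTheory.integral_fintype_prod_volume_eq_prod]
    rw [← Finset.mul_prod_erase _ _ (Finset.mem_univ i)]
    rw [Finset.prod_eq_one (fun k hk => by
      have hne := (Finset.mem_erase.1 hk).1
      have h2 : (fun x : Bool => f k x) = fun _ => (1 : ℝ) := funext fun x => by simp [hf, hne]
      rw [h2, integral_const, probReal_univ]; simp)]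
    have h3 : (fun x : Bool => f i x) = fun x => (val x - m) ^ 2 :=
      funext fun x => by simp [hf]
    rw [h3, mul_one]
    exact integral_val_sub_sq hm
  · simp only [if_neg hij]
    set f : Fin n → Bool → ℝ :=
      fun k b => if k = i then (val b - m) else if k = j then (val b - m) else 1 with hf
    have hji : j ≠ i := fun h => hij h.symm
    have hmem : j ∈ Finset.univ.erase i := Finset.mem_erase.2 ⟨hji, Finset.mem_univ j⟩
    have h1 : ∀ ω : Fin n → Bool,
        (val (ω i) - m) * (val (ω j) - m) = ∏ k, f k (ω k) := by
      intro ω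
      rw [← Finset.mul_prod_erase _ _ (Finset.mem_univ i), ← Finset.mul_prod_erase _ _ hmem]
      rw [Finset.prod_eq_one (fun k hk => by
        simp [hf, (Finset.mem_erase.1 (Finset.mem_erase.1 hk).2).1, (Finset.mem_erase.1 hk).1])]
      simp [hf, hji]
    simp_rw [h1]
    rw [MeasureTheory.integral_fintype_prod_volume_eq_prod]
    apply Finset.prod_eq_zero (Finset.mem_univ i)
    have h3 : (fun x : Bool => f i x) = fun x => (val x - m) := funext fun x => by simp [hf]
    rw [h3]
    exact integral_val_sub hm

lemma second_moment {m : ℝ} (hm : m ∈ Set.Icc (-1 : ℝ) 1) {n : ℕ} (hn : 0 < n) :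
    ∫ ω, ((∑ i, val (ω i)) / n - m) ^ 2 ∂(Measure.pi fun _ : Fin n => bern m)
      = (1 - m ^ 2) / n := by
  haveI := isProbabilityMeasure_bern hm
  have hn' : (n : ℝ) ≠ 0 := Nat.cast_ne_zero.2 hn.ne'
  have h1 : ∀ ω : Fin n → Bool,
      ((∑ i, val (ω i)) / n - m) ^ 2
        = (∑ i, ∑ j, (val (ω i) - m) * (val (ω j) - m)) / (n ^ 2 : ℝ) := by
    intro ω
    rw [← Finset.sum_mul_sum]
    have : (∑ i, (val (ω i) - m)) = (∑ i, val (ω i)) - n * m := by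
      rw [Finset.sum_sub_distrib]
      simp [Finset.card_univ, mul_comm]
    rw [this]
    field_simp
  simp_rw [h1]
  rw [integral_div, integral_finset_sum _ (fun i _ => Integrable.of_finite)]
  have h2 : ∀ i : Fin n, ∫ ω, (∑ j, (val (ω i) - m) * (val (ω j) - m))
      ∂(Measure.pi fun _ : Fin n => bern m) = 1 - m ^ 2 := by
    intro i
    rw [integral_finset_sum _ (fun j _ => Integrable.of_finite)]
    rw [Finset.sum_congr rfl (fun j _ => cross hm i j)]
    simp
  rw [Finset.sum_congr rfl (fun i _ => h2 i)]
  simp only [Finset.sum_const, Finset.card_univ, Fintype.card_fin, nsmul_eq_mul]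
  field_simp

lemma inner_tendsto (f : BoundedContinuousFunction ℝ ℝ) {m : ℝ} (hm : m ∈ Set.Icc (-1 : ℝ) 1) :
    Tendsto (fun n : ℕ => ∫ ω, f ((∑ i, val (ω i)) / n) ∂(Measure.pi fun _ : Fin n => bern m))
      atTop (𝓝 (f m)) := by
  haveI := isProbabilityMeasure_bern hm
  rw [Metric.tendsto_atTop]
  intro ε hε
  obtain ⟨δ, hδ, hδ'⟩ :=
    Metric.continuousAt_iff.1 (f.continuous.continuousAt (x := m)) (ε / 2) (by linarith)
  obtain ⟨C, hCpos, hCge⟩ : ∃ C : ℝ, 0 < C ∧ 2 * ‖f‖ / δ ^ 2 ≤ C :=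
    ⟨2 * ‖f‖ / δ ^ 2 + 1, by positivity, by linarith⟩
  have hpt : ∀ x : ℝ, |f x - f m| ≤ ε / 2 + C * (x - m) ^ 2 := by
    intro x
    have hb : |f x - f m| ≤ 2 * ‖f‖ := by
      calc |f x - f m| ≤ |f x| + |f m| := abs_sub _ _
        _ ≤ ‖f‖ + ‖f‖ := add_le_add (f.norm_coe_le_norm x) (f.norm_coe_le_norm m)
        _ = 2 * ‖f‖ := by ring
    by_cases h : dist x m < δ
    · have := le_of_lt (hδ' h)
      rw [Real.dist_eq] at this
      have hnn : 0 ≤ C * (x - m) ^ 2 := mul_nonneg hCpos.le (sq_nonneg _)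
      linarith
    · push_neg at h
      rw [Real.dist_eq] at h
      have hd2 : δ ^ 2 ≤ (x - m) ^ 2 := by nlinarith [abs_nonneg (x - m), sq_abs (x - m)]
      have h3 : 2 * ‖f‖ = (2 * ‖f‖ / δ ^ 2) * δ ^ 2 := by field_simp
      have h4 : (2 * ‖f‖ / δ ^ 2) * δ ^ 2 ≤ C * (x - m) ^ 2 := by
        calc (2 * ‖f‖ / δ ^ 2) * δ ^ 2 ≤ (2 * ‖f‖ / δ ^ 2) * (x - m) ^ 2 :=
              mul_le_mul_of_nonneg_left hd2 (by positivity)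
          _ ≤ C * (x - m) ^ 2 := mul_le_mul_of_nonneg_right hCge (sq_nonneg _)
      linarith
  have key : ∀ n : ℕ, 0 < n →
      dist (∫ ω, f ((∑ i, val (ω i)) / n) ∂(Measure.pi fun _ : Fin n => bern m)) (f m)
        ≤ ε / 2 + C * ((1 - m ^ 2) / n) := by
    intro n hn
    rw [Real.dist_eq]
    have h0 : ∫ _ : Fin n → Bool, (f m : ℝ) ∂(Measure.pi fun _ : Fin n => bern m) = f m := by
      rw [integral_const]; simp
    calc |(∫ ω, f ((∑ i, val (ω i)) / n) ∂(Measure.pi fun _ : Fin n => bern m)) - f m|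
        = |∫ ω, (f ((∑ i, val (ω i)) / n) - f m) ∂(Measure.pi fun _ : Fin n => bern m)| := by
          rw [integral_sub Integrable.of_finite Integrable.of_finite, h0]
      _ ≤ ∫ ω, |f ((∑ i, val (ω i)) / n) - f m| ∂(Measure.pi fun _ : Fin n => bern m) := by
          simpa [Real.norm_eq_abs] using
            norm_integral_le_integral_norm
              (μ := Measure.pi fun _ : Fin n => bern m)
              (fun ω : Fin n → Bool => f ((∑ i, val (ω i)) / n) - f m)
      _ ≤ ∫ ω, (ε / 2 + C * ((∑ i, val (ω i)) / n - m) ^ 2)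
            ∂(Measure.pi fun _ : Fin n => bern m) :=
          integral_mono Integrable.of_finite Integrable.of_finite (fun ω => hpt _)
      _ = ε / 2 + C * ((1 - m ^ 2) / n) := by
          rw [integral_add Integrable.of_finite Integrable.of_finite, integral_const,
            integral_const_mul, second_moment hm hn]
          simp
  obtain ⟨N₀, hN₀⟩ := exists_nat_gt (2 * C / ε)
  refine ⟨max N₀ 1, fun n hn => ?_⟩
  have hn1 : 0 < n := lt_of_lt_of_le (by norm_num) (le_trans (le_max_right N₀ 1) hn)
  have hnN : (N₀ : ℝ) ≤ n := Nat.cast_le.2 (le_trans (le_max_left N₀ 1) hn)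
  have hn' : (0 : ℝ) < n := Nat.cast_pos.2 hn1
  have h2C : 2 * C < n * ε := by
    have := (div_lt_iff₀ hε).1 (lt_of_lt_of_le hN₀ hnN)
    linarith
  have hm2 : (1 - m ^ 2) / n ≤ 1 / n := by
    gcongr
    nlinarith [sq_nonneg m]
  calc dist (∫ ω, f ((∑ i, val (ω i)) / n) ∂(Measure.pi fun _ : Fin n => bern m)) (f m)
      ≤ ε / 2 + C * ((1 - m ^ 2) / n) := key n hn1
    _ ≤ ε / 2 + C * (1 / n) := by
        have := mul_le_mul_of_nonneg_left hm2 hCpos.le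
        linarith
    _ < ε := by
        rw [mul_one_div]
        have hlt : C / n < ε / 2 := by rw [div_lt_iff₀ hn']; linarith
        linarith

def cbmMeasure (μ : Measure ℝ) (n : ℕ) : Measure (Fin n → Bool) :=
  μ.bind fun m => Measure.pi fun _ : Fin n => bern m

instance (m : ℝ) : IsFiniteMeasure (bern m) := by
  constructor
  rw [bern_apply]
  simp only [Set.indicator_univ, Pi.one_apply, mul_one]
  exact ENNReal.add_lt_top.2 ⟨ENNReal.ofReal_lt_top, ENNReal.ofReal_lt_top⟩

lemma pi_singleton (m : ℝ) {n : ℕ} (ω : Fin n → Bool) :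
    (Measure.pi fun _ : Fin n => bern m) {ω} = ∏ i, bern m {ω i} := by
  rw [← Set.univ_pi_singleton ω, Measure.pi_pi]

lemma measurable_pi_singleton {n : ℕ} (ω : Fin n → Bool) :
    Measurable fun m : ℝ => (Measure.pi fun _ : Fin n => bern m) {ω} := by
  simp_rw [pi_singleton]
  apply Finset.measurable_prod
  intro i _
  cases h : ω i <;> simp only [bern_singleton, h, reduceIte, Bool.false_eq_true] <;>
    exact ENNReal.measurable_ofReal.comp (by fun_prop)

lemma pi_singleton_lt_top (m : ℝ) {n : ℕ} (ω : Fin n → Bool) :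
    (Measure.pi fun _ : Fin n => bern m) {ω} < ⊤ := by
  rw [pi_singleton]
  exact ENNReal.prod_lt_top fun i _ => by rw [bern_singleton]; exact ENNReal.ofReal_lt_top

lemma measurable_kernel (n : ℕ) :
    Measurable fun m : ℝ => Measure.pi fun _ : Fin n => bern m := by
  apply Measure.measurable_of_measurable_coe
  intro s _
  have hrep : ∀ m : ℝ, (Measure.pi fun _ : Fin n => bern m) s
      = ∑ ω ∈ s.toFinite.toFinset, (Measure.pi fun _ : Fin n => bern m) {ω} := by
    intro m
    rw [← measure_biUnion_finset ?_ (fun ω _ => measurableSet_singleton ω)]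
    · congr 1
      ext ω
      simp
    · intro a _ b _ hab
      simp [Function.onFun, Set.disjoint_singleton, hab]
  simp_rw [hrep]
  exact Finset.measurable_sum _ fun ω _ => measurable_pi_singleton ω

lemma cbm_singleton (μ : Measure ℝ) (n : ℕ) (ω : Fin n → Bool) :
    (cbmMeasure μ n) {ω} = ∫⁻ m, (Measure.pi fun _ : Fin n => bern m) {ω} ∂μ :=
  Measure.bind_apply (measurableSet_singleton ω) (measurable_kernel n).aemeasurable

lemma ae_Icc {μ : Measure ℝ} (hsupp : μ (Set.Icc (-1 : ℝ) 1)ᶜ = 0) :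
    ∀ᵐ m ∂μ, m ∈ Set.Icc (-1 : ℝ) 1 := by
  rw [ae_iff]
  exact hsupp

lemma cbm_isProb (μ : Measure ℝ) [IsProbabilityMeasure μ]
    (hsupp : μ (Set.Icc (-1 : ℝ) 1)ᶜ = 0) (n : ℕ) :
    IsProbabilityMeasure (cbmMeasure μ n) := by
  constructor
  rw [cbmMeasure, Measure.bind_apply MeasurableSet.univ (measurable_kernel n).aemeasurable]
  have : ∀ᵐ m ∂μ, (Measure.pi fun _ : Fin n => bern m) Set.univ = 1 := by
    filter_upwards [ae_Icc hsupp] with m hm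
    haveI := isProbabilityMeasure_bern hm
    exact measure_univ
  rw [lintegral_congr_ae this, lintegral_one, measure_univ]

/-- **Law of large numbers for the collective bias model**: if `μ` is a symmetric
probability measure on `[−1,1]`, then under `ℙ_CBM` the per-capita voting margin
`S_n/n` converges in distribution to `μ` as `n → ∞`. -/
theorem cbm_law_of_large_numbers
    (μ : Measure ℝ) (hprob : IsProbabilityMeasure μ)
    (hsupp : μ (Set.Icc (-1 : ℝ) 1)ᶜ = 0)
    (hsymm : μ.map (fun m => -m) = μ) :
    ∀ f : BoundedContinuousFunction ℝ ℝ,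
      Tendsto
        (fun n : ℕ => ∫ ω, f ((∑ i, val (ω i)) / n) ∂(cbmMeasure μ n))
        atTop (𝓝 (∫ x, f x ∂μ)) := by
  intro f
  haveI : ∀ n, IsProbabilityMeasure (cbmMeasure μ n) := fun n => cbm_isProb μ hsupp n
  set G : ℕ → ℝ → ℝ := fun n m =>
    ∑ ω : Fin n → Bool,
      ((Measure.pi fun _ : Fin n => bern m) {ω}).toReal * f ((∑ i, val (ω i)) / n) with hG
  have hGmeas : ∀ n, Measurable (G n) := fun n =>
    Finset.measurable_sum _ fun ω _ =>
      ((measurable_pi_singleton ω).ennreal_toReal).mul_const _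
  have hGeq : ∀ n : ℕ, ∀ m ∈ Set.Icc (-1 : ℝ) 1,
      G n m = ∫ ω, f ((∑ i, val (ω i)) / n) ∂(Measure.pi fun _ : Fin n => bern m) := by
    intro n m hm
    haveI := isProbabilityMeasure_bern hm
    rw [integral_fintype Integrable.of_finite]
    simp only [hG, smul_eq_mul, measureReal_def]
  have hint : ∀ n : ℕ, ∀ ω : Fin n → Bool,
      Integrable (fun m : ℝ =>
        ((Measure.pi fun _ : Fin n => bern m) {ω}).toReal * f ((∑ i, val (ω i)) / n)) μ := by
    intro n ω
    apply Integrable.mono' (integrable_const |f ((∑ i, val (ω i)) / n)|)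
      (((measurable_pi_singleton ω).ennreal_toReal).mul_const _).aestronglyMeasurable
    filter_upwards [ae_Icc hsupp] with m hm
    haveI := isProbabilityMeasure_bern hm
    have h1 : ((Measure.pi fun _ : Fin n => bern m) {ω}).toReal ≤ 1 := by
      have h2 := ENNReal.toReal_mono (a := (Measure.pi fun _ : Fin n => bern m) {ω})
        ENNReal.one_ne_top prob_le_one
      rwa [ENNReal.toReal_one] at h2
    have h0 : 0 ≤ ((Measure.pi fun _ : Fin n => bern m) {ω}).toReal := ENNReal.toReal_nonneg
    rw [Real.norm_eq_abs, abs_mul, abs_of_nonneg h0]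
    nlinarith [abs_nonneg (f ((∑ i, val (ω i)) / n))]
  have hstep : ∀ n : ℕ,
      ∫ ω, f ((∑ i, val (ω i)) / n) ∂(cbmMeasure μ n) = ∫ m, G n m ∂μ := by
    intro n
    rw [integral_fintype Integrable.of_finite]
    have hR : ∫ m, G n m ∂μ
        = ∑ ω : Fin n → Bool, ∫ m,
            ((Measure.pi fun _ : Fin n => bern m) {ω}).toReal * f ((∑ i, val (ω i)) / n) ∂μ :=
      integral_finset_sum _ (fun ω _ => hint n ω)
    rw [hR]
    refine Finset.sum_congr rfl fun ω _ => ?_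
    rw [measureReal_def, integral_mul_const, integral_toReal (measurable_pi_singleton ω).aemeasurable
      (ae_of_all _ fun m => pi_singleton_lt_top m ω), cbm_singleton, smul_eq_mul]
  have hdom := tendsto_integral_of_dominated_convergence (μ := μ) (F := G)
    (f := fun m => f m) (fun _ => ‖f‖)
    (fun n => (hGmeas n).aestronglyMeasurable)
    (integrable_const _)
    (fun n => by
      filter_upwards [ae_Icc hsupp] with m hm
      rw [hGeq n m hm]
      haveI := isProbabilityMeasure_bern hm
      calc ‖∫ ω, f ((∑ i, val (ω i)) / n) ∂(Measure.pi fun _ : Fin n => bern m)‖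
          ≤ ∫ ω, ‖f ((∑ i, val (ω i)) / n)‖ ∂(Measure.pi fun _ : Fin n => bern m) :=
            norm_integral_le_integral_norm _
        _ ≤ ∫ _ω : Fin n → Bool, ‖f‖ ∂(Measure.pi fun _ : Fin n => bern m) :=
            integral_mono Integrable.of_finite (integrable_const _)
              (fun ω => f.norm_coe_le_norm _)
        _ = ‖f‖ := by rw [integral_const]; simp)
    (by
      filter_upwards [ae_Icc hsupp] with m hm
      exact (inner_tendsto f hm).congr fun n => (hGeq n m hm).symm)
  exact hdom.congr fun n => (hstep n).symm
end
end
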